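/- The word growth function satisfies the functional equation γ_m(n+1) = γ_m(n) + γ_m(⌊n/m⌋) for every n ≥ 0. -/

import Mathlib

/- The automaton transformation `f₀` of the Mealy automaton `I_m` acting on
infinite words `u : ℕ → Fin m`: if `u` is constantly `m-1` it returns the
constant `0` sequence; otherwise, with `j` the least index where `u j ≠ m-1`,
it sets positions `≤ j` to `0` and keeps the rest. -/
open Classical in
noncomputable def f0 (m : ℕ) (u : ℕ → Fin m) : ℕ → Fin m :=
  if h : ∃ j, (u j : ℕ) ≠ m - 1 then
    fun i => if i ≤ Nat.find h then ⟨0, (u 0).pos⟩ else u i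
  else fun _ => ⟨0, (u 0).pos⟩

/- The automaton transformation `f₁` (the base-`m` odometer): if `u` is
constantly `m-1` it returns the constant `0` sequence; otherwise, with `j` the
least index where `u j ≠ m-1`, positions `< j` become `0`, position `j` is
incremented and the rest are kept. -/
open Classical in
noncomputable def f1 (m : ℕ) (u : ℕ → Fin m) : ℕ → Fin m :=
  if h : ∃ j, (u j : ℕ) ≠ m - 1 then
    fun i =>
      if i < Nat.find h then ⟨0, (u 0).pos⟩
      else if hie : i = Nat.find h then
        ⟨(u i : ℕ) + 1, by
          have h2 := Nat.find_spec h
          rw [← hie] at h2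
          have h3 := (u i).isLt
          have h4 := (u 0).pos
          omega⟩
      else u i
  else fun _ => ⟨0, (u 0).pos⟩

/- The automaton transformation monoid `S_m`: the set of self-maps of
`ℕ → Fin m` that are finite compositions of maps from `{f₀, f₁}`. -/
def SM (m : ℕ) : Set ((ℕ → Fin m) → ℕ → Fin m) :=
  {s | ∃ L : List ((ℕ → Fin m) → ℕ → Fin m),
    (∀ g ∈ L, g = f0 m ∨ g = f1 m) ∧ L.foldr (· ∘ ·) id = s}

/- The length `ℓ(s)`: the least `n` such that `s` is a composition of `n` maps,
each equal to `f₀` or `f₁` (so `ℓ(id) = 0`). -/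
noncomputable def wordLength (m : ℕ) (s : (ℕ → Fin m) → ℕ → Fin m) : ℕ :=
  sInf {n | ∃ L : List ((ℕ → Fin m) → ℕ → Fin m),
    L.length = n ∧ (∀ g ∈ L, g = f0 m ∨ g = f1 m) ∧ L.foldr (· ∘ ·) id = s}

/- The word growth function `γ_m(n) = card {s ∈ S_m : ℓ(s) = n}`. -/
noncomputable def gammaW (m n : ℕ) : ℕ :=
  Set.ncard {s | s ∈ SM m ∧ wordLength m s = n}

/- The growth function `Γ_m(n) = card {s ∈ S_m : ℓ(s) ≤ n}`. -/
noncomputable def GammaG (m n : ℕ) : ℕ :=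
  Set.ncard {s | s ∈ SM m ∧ wordLength m s ≤ n}


namespace Odo

/-- remove the lowest nonzero base-`m` digit of an integer (0 for 0). -/
def dd (m : ℕ) (s : ℤ) : ℤ :=
  if h2 : 2 ≤ m then
    if hs : s % (m : ℤ) = 0 then
      if h0 : s = 0 then 0 else (m : ℤ) * dd m (s / (m : ℤ))
    else s - s % (m : ℤ)
  else 0
termination_by s.natAbs
decreasing_by
  · have hdvd : (m : ℤ) ∣ s := Int.dvd_of_emod_eq_zero hs
    obtain ⟨t, rfl⟩ := hdvd
    have hmz : (m : ℤ) ≠ 0 := by exact_mod_cast (by omega : m ≠ 0)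
    rw [Int.mul_ediv_cancel_left _ hmz]
    have ht : t ≠ 0 := by rintro rfl; simp at h0
    have h1 : ((m:ℤ) * t).natAbs = m * t.natAbs := by
      rw [Int.natAbs_mul]; simp
    rw [h1]
    have h2' : 1 ≤ t.natAbs := by
      rcases Nat.eq_zero_or_pos t.natAbs with h | h
      · exact absurd (Int.natAbs_eq_zero.mp h) ht
      · exact h
    nlinarith

variable {m : ℕ}

lemma dd_zero (m : ℕ) : dd m 0 = 0 := by
  rw [dd]; split <;> simp

lemma dd_emod_ne (hm : 2 ≤ m) {s : ℤ} (h : s % (m:ℤ) ≠ 0) :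
    dd m s = s - s % m := by
  rw [dd, dif_pos hm, dif_neg h]

lemma dd_mul (hm : 2 ≤ m) (t : ℤ) : dd m ((m:ℤ) * t) = m * dd m t := by
  rcases eq_or_ne t 0 with rfl | ht
  · simp [dd_zero]
  · have hmz : (m : ℤ) ≠ 0 := by exact_mod_cast (by omega : m ≠ 0)
    rw [dd, dif_pos hm, dif_pos (by simp [Int.mul_emod_right]),
      dif_neg (mul_ne_zero hmz ht), Int.mul_ediv_cancel_left _ hmz]

lemma hM (hm : 2 ≤ m) : (0:ℤ) < (m:ℤ) := by exact_mod_cast (by omega : 0 < m)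

lemma dd_dvd (hm : 2 ≤ m) (s : ℤ) : (m:ℤ) ∣ dd m s := by
  by_cases h : s % (m:ℤ) = 0
  · obtain ⟨t, rfl⟩ := Int.dvd_of_emod_eq_zero h
    rw [dd_mul hm]; exact Dvd.intro _ rfl
  · rw [dd_emod_ne hm h]
    have := Int.mul_ediv_add_emod s (m:ℤ)
    exact ⟨s / m, by linarith⟩

lemma dd_nonneg (hm : 2 ≤ m) : ∀ s : ℤ, 0 ≤ s → 0 ≤ dd m s := by
  have key : ∀ n : ℕ, ∀ s : ℤ, s.natAbs ≤ n → 0 ≤ s → 0 ≤ dd m s := by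
    intro n
    induction n with
    | zero =>
      intro s h1 _
      have : s = 0 := by omega
      simp [this, dd_zero]
    | succ n IH =>
      intro s hn hs
      by_cases h : s % (m:ℤ) = 0
      · obtain ⟨t, rfl⟩ := Int.dvd_of_emod_eq_zero h
        rw [dd_mul hm]
        have hm2 : (2:ℤ) ≤ (m:ℤ) := by exact_mod_cast hm
        have hm2 : (2:ℤ) ≤ (m:ℤ) := by exact_mod_cast hm
        have ht0 : 0 ≤ t := by by_contra hneg; push_neg at hneg; nlinarith
        rcases eq_or_ne t 0 with rfl | ht
        · simp [dd_zero]
        · have hm2' : (2:ℤ) ≤ (m:ℤ) := by exact_mod_cast hm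
          have habs : ((m:ℤ) * t).natAbs = m * t.natAbs := by
            rw [Int.natAbs_mul]; simp
          have h2' : 1 ≤ t.natAbs := by
            rcases Nat.eq_zero_or_pos t.natAbs with h' | h'
            · exact absurd (Int.natAbs_eq_zero.mp h') ht
            · exact h'
          have : t.natAbs ≤ n := by rw [habs] at hn; nlinarith
          have := IH t this ht0
          positivity
      · rw [dd_emod_ne hm h]
        have h1 := Int.emod_nonneg s (ne_of_gt (hM hm))
        have h2 := Int.emod_lt_of_pos s (hM hm)
        -- s - s % m = m * (s/m) ≥ 0
        have h3 := Int.mul_ediv_add_emod s (m:ℤ)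
        have h4 : 0 ≤ s / (m:ℤ) := Int.ediv_nonneg hs (le_of_lt (hM hm))
        nlinarith
  intro s hs; exact key s.natAbs s le_rfl hs

lemma dd_lt (hm : 2 ≤ m) : ∀ s : ℤ, 0 < s → dd m s < s := by
  have key : ∀ n : ℕ, ∀ s : ℤ, s.natAbs ≤ n → 0 < s → dd m s < s := by
    intro n
    induction n with
    | zero => intro s h1 h2; omega
    | succ n IH =>
      intro s hn hs
      by_cases h : s % (m:ℤ) = 0
      · obtain ⟨t, rfl⟩ := Int.dvd_of_emod_eq_zero h
        rw [dd_mul hm]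
        have hm2 : (2:ℤ) ≤ (m:ℤ) := by exact_mod_cast hm
        have ht0 : 0 < t := by nlinarith [mul_pos_iff.mp hs]
        have habs : ((m:ℤ) * t).natAbs = m * t.natAbs := by
          rw [Int.natAbs_mul]; simp
        have h2' : 1 ≤ t.natAbs := by
          have : t ≠ 0 := ne_of_gt ht0
          rcases Nat.eq_zero_or_pos t.natAbs with h' | h'
          · exact absurd (Int.natAbs_eq_zero.mp h') this
          · exact h'
        have : t.natAbs ≤ n := by rw [habs] at hn; nlinarith
        have := IH t this ht0
        have hm0 := hM hm
        nlinarith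
      · rw [dd_emod_ne hm h]
        have h1 := Int.emod_nonneg s (ne_of_gt (hM hm))
        omega
  intro s hs; exact key s.natAbs s le_rfl hs

lemma dd_pow_mul (hm : 2 ≤ m) (k : ℕ) (y : ℤ) :
    dd m ((m:ℤ)^k * y) = (m:ℤ)^k * dd m y := by
  induction k with
  | zero => simp
  | succ k IH =>
    have : ((m:ℤ))^(k+1) * y = (m:ℤ) * ((m:ℤ)^k * y) := by ring
    rw [this, dd_mul hm, IH]; ring

lemma dd_pow (hm : 2 ≤ m) (N : ℕ) : dd m ((m:ℤ)^N) = 0 := by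
  have h1 : dd m 1 = 0 := by
    have : (1:ℤ) % (m:ℤ) = 1 := by
      apply Int.emod_eq_of_lt <;> [norm_num; exact_mod_cast (by omega : (1:ℤ) < m)]
    rw [dd_emod_ne hm (by rw [this]; norm_num), this]; ring
  calc dd m ((m:ℤ)^N) = dd m ((m:ℤ)^N * 1) := by ring_nf
    _ = (m:ℤ)^N * dd m 1 := dd_pow_mul hm N 1
    _ = 0 := by rw [h1]; ring

/-- key shift lemma: if `m^k ∤ s` (`s > 0`) then `dd (s + m^k y) = dd s + m^k y`. -/
lemma dd_shift (hm : 2 ≤ m) : ∀ s : ℤ, 0 < s → ∀ (k : ℕ) (y : ℤ),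
    ¬ ((m:ℤ)^k ∣ s) → dd m (s + (m:ℤ)^k * y) = dd m s + (m:ℤ)^k * y := by
  have key : ∀ n : ℕ, ∀ s : ℤ, s.natAbs ≤ n → 0 < s → ∀ (k : ℕ) (y : ℤ),
      ¬ ((m:ℤ)^k ∣ s) → dd m (s + (m:ℤ)^k * y) = dd m s + (m:ℤ)^k * y := by
    intro n
    induction n with
    | zero => intro s h1 h2; omega
    | succ n IH =>
      intro s hn hs k y hnd
      rcases Nat.eq_zero_or_pos k with rfl | hk
      · exact absurd (by simpa using (one_dvd s)) hnd
      by_cases h : s % (m:ℤ) = 0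
      · obtain ⟨t, rfl⟩ := Int.dvd_of_emod_eq_zero h
        obtain ⟨k', rfl⟩ : ∃ k', k = k' + 1 := ⟨k - 1, by omega⟩
        have heq : (m:ℤ) * t + (m:ℤ)^(k'+1) * y = (m:ℤ) * (t + (m:ℤ)^k' * y) := by ring
        rw [heq, dd_mul hm, dd_mul hm]
        have ht0 : 0 < t := by
          have hm2 : (2:ℤ) ≤ (m:ℤ) := by exact_mod_cast hm
          nlinarith [mul_pos_iff.mp hs]
        have hnd' : ¬ ((m:ℤ)^k' ∣ t) := by
          intro ⟨c, hc⟩; exact hnd ⟨c, by rw [hc]; ring⟩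
        have habs : ((m:ℤ) * t).natAbs = m * t.natAbs := by rw [Int.natAbs_mul]; simp
        have h2' : 1 ≤ t.natAbs := by
          rcases Nat.eq_zero_or_pos t.natAbs with h' | h'
          · exact absurd (Int.natAbs_eq_zero.mp h') (ne_of_gt ht0)
          · exact h'
        have htn : t.natAbs ≤ n := by rw [habs] at hn; nlinarith
        rw [IH t htn ht0 k' y hnd']; ring
      · obtain ⟨k', rfl⟩ : ∃ k', k = k' + 1 := ⟨k - 1, by omega⟩
        have hmod : (s + (m:ℤ)^(k'+1) * y) % (m:ℤ) = s % m := by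
          have : (m:ℤ)^(k'+1) * y = ((m:ℤ)^k' * y) * m := by ring
          rw [this, Int.add_mul_emod_self_right]
        rw [dd_emod_ne hm (by rw [hmod]; exact h), dd_emod_ne hm h, hmod]; ring
  intro s hs; exact key s.natAbs s le_rfl hs

/-- `DD m s = dd m s / m`: the scaled digit-drop map. -/
def DD (m : ℕ) (s : ℤ) : ℤ := dd m s / (m:ℤ)

lemma mDD (hm : 2 ≤ m) (s : ℤ) : (m:ℤ) * DD m s = dd m s :=
  Int.mul_ediv_cancel' (dd_dvd hm s)

lemma DD_of_r (hm : 2 ≤ m) (t r : ℤ) (h1 : 0 < r) (h2 : r < m) :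
    DD m ((m:ℤ) * t + r) = t := by
  have hr : ((m:ℤ) * t + r) % m = r := by
    rw [add_comm, Int.add_mul_emod_self_left]
    exact Int.emod_eq_of_lt (by omega) h2
  have := dd_emod_ne hm (s := (m:ℤ)*t + r) (by rw [hr]; omega)
  rw [DD, this, hr]
  simp [Int.add_sub_cancel, Int.mul_ediv_cancel_left, (by omega : (m:ℤ)*t+r-r = m*t)]
  rw [Int.mul_ediv_cancel_left _ (by exact_mod_cast (by omega : m ≠ 0))]

lemma DD_mul (hm : 2 ≤ m) (t : ℤ) : DD m ((m:ℤ) * t) = dd m t := by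
  rw [DD, dd_mul hm, Int.mul_ediv_cancel_left _ (by exact_mod_cast (by omega : m ≠ 0))]

lemma DD_pow (hm : 2 ≤ m) {N : ℕ} (hN : 1 ≤ N) : DD m ((m:ℤ)^N) = 0 := by
  obtain ⟨N', rfl⟩ : ∃ N', N = N' + 1 := ⟨N - 1, by omega⟩
  rw [pow_succ, mul_comm, DD_mul hm, dd_pow hm]

lemma DD_surj (hm : 2 ≤ m) (t : ℤ) : DD m ((m:ℤ) * t + 1) = t :=
  DD_of_r hm t 1 one_pos (by exact_mod_cast (by omega : 1 < m))

/-- iterated drop-and-shift map. -/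
def HH (m : ℕ) : List ℕ → ℤ → ℤ
  | [], x => x
  | c :: M, x => HH m M (DD m (x + c + 1))

/-- length of the word encoded by gap data. -/
def glen (m : ℕ) : List ℕ → ℕ
  | [] => 0
  | c :: M => (c + 1) + m * glen m M

/-- semantics of normal-form data. -/
def sem (m : ℕ) (b : ℕ) (L : List ℕ) (x : ℤ) : ℤ := (b:ℤ) + (m:ℤ)^(L.length) * HH m L x

lemma HH_append (L : List ℕ) (t : ℕ) (x : ℤ) :
    HH m (L ++ [t]) x = DD m (HH m L x + t + 1) := by
  induction L generalizing x with
  | nil => simp [HH]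
  | cons c M IH => simp [HH, IH]

lemma glen_append (L : List ℕ) (t : ℕ) :
    glen m (L ++ [t]) = glen m L + m^(L.length) * (t+1) := by
  induction L with
  | nil => simp [glen]
  | cons c M IH => simp [glen, IH]; ring

lemma HH_surj (hm : 2 ≤ m) (L : List ℕ) : ∀ t : ℤ, ∃ x, HH m L x = t := by
  induction L with
  | nil => exact fun t => ⟨t, rfl⟩
  | cons c M IH =>
    intro t
    obtain ⟨x₀, hx₀⟩ := IH t
    refine ⟨(m:ℤ) * x₀ - c, ?_⟩
    have : (m:ℤ) * x₀ - c + c + 1 = (m:ℤ) * x₀ + 1 := by ring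
    rw [HH, this, DD_surj hm, hx₀]




variable {m : ℕ}

lemma lt_pow_self' (hm : 2 ≤ m) {u : ℤ} {j : ℕ} (hu : 0 ≤ u) (hj : u.toNat < j) :
    u < (m:ℤ)^j := by
  have h1 : u.toNat < 2^j := lt_of_lt_of_le (Nat.lt_two_pow_self (n := u.toNat))
    (Nat.pow_le_pow_right (by norm_num) (by omega))
  have h2 : (2:ℕ)^j ≤ m^j := Nat.pow_le_pow_left hm j
  have : u.toNat < m^j := lt_of_lt_of_le h1 h2
  calc u = (u.toNat : ℤ) := by omega
    _ < ((m^j : ℕ) : ℤ) := by exact_mod_cast this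
    _ = (m:ℤ)^j := by push_cast; ring

/-- behaviour of `DD` on huge power plus fixed positive offset. -/
lemma DD_pow_add (hm : 2 ≤ m) (w₁ : ℤ) (hw : 0 < w₁) :
    ∃ (N₁ : ℕ) (w₂ : ℤ), 0 ≤ w₂ ∧ 1 ≤ N₁ ∧
      ∀ N : ℕ, N₁ ≤ N → DD m ((m:ℤ)^N + w₁) = (m:ℤ)^(N-1) + w₂ := by
  have hm0 := hM hm
  by_cases h : w₁ % (m:ℤ) = 0
  · -- w₁ = m * u, u ≥ 1
    obtain ⟨u, rfl⟩ := Int.dvd_of_emod_eq_zero h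
    have hu : 1 ≤ u := by nlinarith [mul_pos_iff.mp hw]
    refine ⟨u.toNat + 2, dd m u, dd_nonneg hm u (by omega), by omega, fun N hN => ?_⟩
    obtain ⟨N', rfl⟩ : ∃ N', N = N' + 1 := ⟨N - 1, by omega⟩
    have hsplit : (m:ℤ)^(N'+1) + (m:ℤ)*u = (m:ℤ) * ((m:ℤ)^N' + u) := by ring
    rw [hsplit, DD_mul hm]
    have hlt : u < (m:ℤ)^N' := lt_pow_self' hm (by omega) (by omega)
    have hnd : ¬ ((m:ℤ)^N' ∣ u) := fun hdvd => by
      have := Int.le_of_dvd (by omega) hdvd; omega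
    have hds := dd_shift hm u (by omega) N' 1 hnd
    simp only [mul_one] at hds
    have e : (m:ℤ)^N' + u = u + (m:ℤ)^N' := by ring
    rw [e, hds]
    have e2 : N' + 1 - 1 = N' := by omega
    rw [e2]; ring
  · -- w₁ = m * q + r
    have hr0 := Int.emod_nonneg w₁ (ne_of_gt hm0)
    have hrm := Int.emod_lt_of_pos w₁ hm0
    have hq : 0 ≤ w₁ / (m:ℤ) := Int.ediv_nonneg (by omega) (by omega)
    refine ⟨1, w₁ / (m:ℤ), hq, le_rfl, fun N hN => ?_⟩
    obtain ⟨N', rfl⟩ : ∃ N', N = N' + 1 := ⟨N - 1, by omega⟩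
    have hsplit : (m:ℤ)^(N'+1) + w₁ = (m:ℤ) * ((m:ℤ)^N' + w₁ / m) + w₁ % m := by
      have h3 := Int.mul_ediv_add_emod w₁ (m:ℤ)
      have h4 : (m:ℤ) * ((m:ℤ)^N' + w₁ / m) + w₁ % m
          = (m:ℤ)^(N'+1) + ((m:ℤ) * (w₁/m) + w₁ % m) := by ring
      rw [h4, h3]
    rw [hsplit, DD_of_r hm _ _ (by omega) hrm]
    have e2 : N' + 1 - 1 = N' := by omega
    rw [e2]

/-- growth lemma: `HH` along `m^N + w` is eventually `m^(N-|M|) + K`. -/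
lemma growth (hm : 2 ≤ m) : ∀ (Ml : List ℕ) (w : ℤ), 0 ≤ w →
    ∃ N₀ : ℕ, Ml.length < N₀ ∧ ∃ K : ℤ, ∀ N : ℕ, N₀ ≤ N →
      HH m Ml ((m:ℤ)^N + w) = (m:ℤ)^(N - Ml.length) + K := by
  intro Ml
  induction Ml with
  | nil => exact fun w hw => ⟨1, by norm_num, w, fun N _ => by simp [HH]⟩
  | cons c M' IH =>
    intro w hw
    obtain ⟨N₁, w₂, hw₂, hN₁, hDD⟩ := DD_pow_add hm (w + c + 1) (by positivity)
    obtain ⟨N₀', hlen, K, hK⟩ := IH w₂ hw₂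
    refine ⟨max N₁ (N₀' + 1), by simp [List.length_cons]; omega, K, fun N hN => ?_⟩
    have h1 : N₁ ≤ N := le_trans (le_max_left _ _) hN
    have h2 : N₀' + 1 ≤ N := le_trans (le_max_right _ _) hN
    have harg : (m:ℤ)^N + w + c + 1 = (m:ℤ)^N + (w + c + 1) := by ring
    rw [HH, harg, hDD N h1, hK (N-1) (by omega)]
    congr 2
    simp [List.length_cons]; omega

lemma step1 (hm : 2 ≤ m) (M M' : List ℕ) (c c' : ℕ) (δ : ℤ) (hcc : c < c')
    (heq : ∀ x, HH m (c::M) x = δ + HH m (c'::M') x) : False := by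
  obtain ⟨N₁, w₂, hw₂, hN₁, hDD⟩ := DD_pow_add hm ((c':ℤ) - c) (by push_cast; omega)
  obtain ⟨N₀', hlen, K, hK⟩ := growth hm M' w₂ hw₂
  have key : ∀ N : ℕ, max N₁ (N₀' + 1) ≤ N →
      HH m M 0 = δ + ((m:ℤ)^(N - 1 - M'.length) + K) := by
    intro N hN
    have h1 : N₁ ≤ N := le_trans (le_max_left _ _) hN
    have h2 : N₀' + 1 ≤ N := le_trans (le_max_right _ _) hN
    have hx := heq ((m:ℤ)^N - (c+1))
    have e1 : (m:ℤ)^N - (c+1) + c + 1 = (m:ℤ)^N := by ring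
    have e2 : (m:ℤ)^N - (c+1) + c' + 1 = (m:ℤ)^N + ((c':ℤ) - c) := by ring
    rw [HH, HH, e1, e2, DD_pow hm (by omega), hDD N h1, hK (N-1) (by omega)] at hx
    exact hx
  set N := max N₁ (N₀' + 1) with hNdef
  have k1 := key N le_rfl
  have k2 := key (N + 1) (by omega)
  have hNlen : M'.length + 1 ≤ N - 1 := by
    have : N₀' + 1 ≤ N := le_max_right _ _
    omega
  have hpow : (m:ℤ)^(N - 1 - M'.length) < (m:ℤ)^(N + 1 - 1 - M'.length) := by
    apply pow_lt_pow_right₀ (by exact_mod_cast (by omega : 1 < m))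
    omega
  omega

lemma lemH (hm : 2 ≤ m) : ∀ (L L' : List ℕ) (δ : ℤ), L.length = L'.length →
    (∀ x, HH m L x = δ + HH m L' x) → L = L' ∧ δ = 0 := by
  intro L
  induction L with
  | nil =>
    intro L' δ hlen heq
    have : L' = [] := List.eq_nil_of_length_eq_zero (by simpa using hlen.symm)
    subst this
    have := heq 0
    simp [HH] at this
    exact ⟨rfl, by omega⟩
  | cons c M IH =>
    intro L' δ hlen heq
    obtain ⟨c', M', rfl⟩ : ∃ c' M', L' = c' :: M' := by
      cases L' with
      | nil => simp at hlen
      | cons a b => exact ⟨a, b, rfl⟩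
    have hcc : c = c' := by
      rcases lt_trichotomy c c' with h | h | h
      · exact absurd (step1 hm M M' c c' δ h heq) not_false
      · exact h
      · exact absurd (step1 hm M' M c' c (-δ) h (fun x => by have := heq x; omega)) not_false
    subst hcc
    have heq' : ∀ u : ℤ, HH m M u = δ + HH m M' u := by
      intro u
      have hx := heq ((m:ℤ) * u - c)
      have e1 : (m:ℤ) * u - c + c + 1 = (m:ℤ) * u + 1 := by ring
      rw [HH, HH, e1, DD_surj hm] at hx
      exact hx
    obtain ⟨h1, h2⟩ := IH M' δ (by simpa using hlen) heq'
    exact ⟨by rw [h1], h2⟩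

lemma len_lt_false (hm : 2 ≤ m) (b b' : ℕ) (L L' : List ℕ) (hlt : L.length < L'.length)
    (h : ∀ x, sem m b L x = sem m b' L' x) : False := by
  obtain ⟨x₀, hx₀⟩ := HH_surj hm L 0
  obtain ⟨x₁, hx₁⟩ := HH_surj hm L 1
  have h0 := h x₀
  have h1 := h x₁
  rw [sem, sem, hx₀] at h0
  rw [sem, sem, hx₁] at h1
  have key : (m:ℤ)^(L.length) = (m:ℤ)^(L'.length) * (HH m L' x₁ - HH m L' x₀) := by
    ring_nf at h0 h1 ⊢
    linarith
  have hdvd : (m:ℤ)^(L.length + 1) ∣ (m:ℤ)^(L.length) := by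
    rw [key]
    exact Dvd.dvd.mul_right (pow_dvd_pow _ (by omega)) _
  have hle := Int.le_of_dvd (by positivity) hdvd
  have : (m:ℤ)^(L.length) < (m:ℤ)^(L.length + 1) := by
    apply pow_lt_pow_right₀ (by exact_mod_cast (by omega : 1 < m)); omega
  omega

lemma sem_inj (hm : 2 ≤ m) (b b' : ℕ) (L L' : List ℕ)
    (h : ∀ x, sem m b L x = sem m b' L' x) : b = b' ∧ L = L' := by
  have hlen : L.length = L'.length := by
    rcases lt_trichotomy L.length L'.length with hl | hl | hl
    · exact absurd (len_lt_false hm b b' L L' hl h) not_false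
    · exact hl
    · exact absurd (len_lt_false hm b' b L' L hl (fun x => (h x).symm)) not_false
  obtain ⟨x₀, hx₀⟩ := HH_surj hm L 0
  have h0 := h x₀
  rw [sem, sem, hx₀, hlen] at h0
  set δ : ℤ := HH m L' x₀ with hδ
  have hb : (b:ℤ) = b' + (m:ℤ)^(L'.length) * δ := by linarith [h0]
  have heq' : ∀ x, HH m L' x = δ + HH m L x := by
    intro x
    have hx := h x
    rw [sem, sem, hlen] at hx
    have hc : (m:ℤ)^(L'.length) * HH m L' x
        = (m:ℤ)^(L'.length) * δ + (m:ℤ)^(L'.length) * HH m L x := by linarith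
    have hc2 : (m:ℤ)^(L'.length) * HH m L' x = (m:ℤ)^(L'.length) * (δ + HH m L x) := by
      rw [hc]; ring
    exact mul_left_cancel₀ (by positivity) hc2
  obtain ⟨h1, h2⟩ := lemH hm L' L δ hlen.symm heq'
  constructor
  · rw [h1, h2] at hb
    simp at hb
    omega
  · exact h1.symm

/-- integer versions of the generators: `true ↦ x+1`, `false ↦ dd(x+1)`. -/
def zgen (m : ℕ) : Bool → ℤ → ℤ
  | true, z => z + 1
  | false, z => dd m (z + 1)

def zmap (m : ℕ) : List Bool → ℤ → ℤ
  | [], z => z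
  | g :: bs, z => zgen m g (zmap m bs z)

lemma sem_nil (b : ℕ) (x : ℤ) : sem m b [] x = x + b := by simp [sem, HH]; ring

lemma sem_succ (b : ℕ) (L : List ℕ) (x : ℤ) : sem m b L x + 1 = sem m (b+1) L x := by
  simp [sem]; push_cast; ring

lemma sem_false_exact (hm : 2 ≤ m) (b t : ℕ) (L : List ℕ)
    (hbt : b + 1 = m^(L.length) * (t+1)) (x : ℤ) :
    dd m (sem m b L x + 1) = sem m 0 (L ++ [t]) x := by
  have harg : sem m b L x + 1 = (m:ℤ)^(L.length) * (HH m L x + (t+1)) := by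
    rw [sem]
    have : ((b:ℤ) + 1) = (m:ℤ)^(L.length) * (t+1) := by exact_mod_cast hbt
    push_cast at this ⊢
    linarith [this, mul_add ((m:ℤ)^(L.length)) (HH m L x) ((t:ℤ)+1)]
  rw [harg, dd_pow_mul hm]
  have : dd m (HH m L x + (↑t + 1)) = (m:ℤ) * DD m (HH m L x + t + 1) := by
    rw [mDD hm]; ring_nf
  rw [this, sem]
  rw [← HH_append]
  simp [List.length_append]
  ring

lemma sem_false_inexact (hm : 2 ≤ m) (b : ℕ) (L : List ℕ)
    (hnd : ¬ (m^(L.length) ∣ (b+1))) (x : ℤ) :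
    dd m (sem m b L x + 1) = sem m (dd m ((b:ℤ)+1)).toNat L x := by
  have hzd : ¬ ((m:ℤ)^(L.length) ∣ ((b:ℤ)+1)) := by
    intro hc
    apply hnd
    have : ((m^(L.length) : ℕ) : ℤ) ∣ (((b+1) : ℕ) : ℤ) := by push_cast; exact hc
    exact_mod_cast this
  have harg : sem m b L x + 1 = ((b:ℤ)+1) + (m:ℤ)^(L.length) * HH m L x := by
    rw [sem]; ring
  rw [harg, dd_shift hm _ (by positivity) _ _ hzd, sem]
  have hnn : 0 ≤ dd m ((b:ℤ)+1) := dd_nonneg hm _ (by positivity)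
  congr 1
  omega

lemma dd_toNat_le (hm : 2 ≤ m) (b : ℕ) : (dd m ((b:ℤ)+1)).toNat ≤ b := by
  have h1 := dd_lt hm ((b:ℤ)+1) (by positivity)
  have h2 := dd_nonneg hm ((b:ℤ)+1) (by positivity)
  omega

/-- normalization: every word is equivalent to a normal form of at most its length. -/
lemma normalize (hm : 2 ≤ m) : ∀ bs : List Bool, ∃ (b : ℕ) (L : List ℕ),
    (∀ x, zmap m bs x = sem m b L x) ∧ b + glen m L ≤ bs.length := by
  intro bs
  induction bs with
  | nil => exact ⟨0, [], fun x => by simp [zmap, sem_nil], by simp [glen]⟩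
  | cons g bs IH =>
    obtain ⟨b, L, hsem, hlen⟩ := IH
    cases g with
    | true =>
      refine ⟨b + 1, L, fun x => ?_, by simp [List.length_cons]; omega⟩
      rw [zmap, zgen, hsem, sem_succ]
    | false =>
      by_cases hd : m^(L.length) ∣ (b+1)
      · obtain ⟨q, hq⟩ := hd
        have hq1 : 1 ≤ q := by
          rcases Nat.eq_zero_or_pos q with rfl | h
          · simp at hq
          · exact h
        obtain ⟨t, rfl⟩ : ∃ t, q = t + 1 := ⟨q - 1, by omega⟩
        refine ⟨0, L ++ [t], fun x => ?_, ?_⟩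
        · rw [zmap, zgen, hsem, sem_false_exact hm b t L hq]
        · rw [glen_append]
          simp [List.length_cons]
          omega
      · refine ⟨(dd m ((b:ℤ)+1)).toNat, L, fun x => ?_, ?_⟩
        · rw [zmap, zgen, hsem, sem_false_inexact hm b L hd]
        · have := dd_toNat_le hm b
          simp [List.length_cons]
          omega

lemma zmap_replicate_true (n : ℕ) (bs : List Bool) (x : ℤ) :
    zmap m (List.replicate n true ++ bs) x = zmap m bs x + n := by
  induction n with
  | zero => simp [zmap]
  | succ n IH => rw [List.replicate_succ, List.cons_append, zmap, zgen, IH]; push_cast; ring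

/-- construction: every normal form is realized by a word of exactly its length. -/
lemma build (hm : 2 ≤ m) (L : List ℕ) : ∀ (b : ℕ), ∃ bs : List Bool,
    (∀ x, zmap m bs x = sem m b L x) ∧ bs.length = b + glen m L := by
  induction L using List.reverseRecOn with
  | nil =>
    intro b
    refine ⟨List.replicate b true, fun x => ?_, by simp [glen]⟩
    have := zmap_replicate_true (m := m) b [] x
    simp [zmap] at this
    rw [this, sem_nil]
  | append_singleton L₀ t IH =>
    intro b
    set g : ℕ := m^(L₀.length) * (t+1) - 1 with hg
    obtain ⟨bs₀, hbs₀, hlen₀⟩ := IH g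
    have hmk : 0 < m^(L₀.length) * (t+1) := by positivity
    refine ⟨List.replicate b true ++ (false :: bs₀), fun x => ?_, ?_⟩
    · rw [zmap_replicate_true, zmap, zgen, hbs₀,
        sem_false_exact hm g t L₀ (by omega)]
      simp [sem]
      ring
    · simp [List.length_append, List.length_cons, hlen₀, glen_append]
      omega






lemma ediv_ediv (a b c : ℤ) (hb : 0 < b) (hc : 0 < c) : a / b / c = a / (b * c) := by
  have hbc : (0:ℤ) < b * c := by positivity
  have h0 : (b*c) * (a / (b*c)) + a % (b*c) = a := Int.mul_ediv_add_emod a (b*c)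
  have hr0 : 0 ≤ a % (b*c) := Int.emod_nonneg a (ne_of_gt hbc)
  have hrlt : a % (b*c) < b * c := Int.emod_lt_of_pos a hbc
  set q := a / (b*c)
  set r := a % (b*c)
  have h1 : a / b = r / b + c * q := by
    have e : a = r + b * (c * q) := by linarith [h0, (by ring : (b*c)*q = b*(c*q))]
    rw [e, Int.add_mul_ediv_left r (c*q) (ne_of_gt hb)]
  have h2 : (0:ℤ) ≤ r / b := Int.ediv_nonneg hr0 (le_of_lt hb)
  have h3 : r / b < c := by
    rw [Int.ediv_lt_iff_lt_mul hb]
    linarith [hrlt]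
  rw [h1]
  have e2 : r / b + c * q = r / b + q * c := by ring
  rw [e2, Int.add_mul_ediv_right _ _ (ne_of_gt hc), Int.ediv_eq_zero_of_lt h2 h3]
  simp

/-- the `i`-th base-`m` digit of an integer. -/
def edig (m : ℕ) (z : ℤ) (i : ℕ) : ℤ := (z / (m:ℤ)^i) % (m:ℤ)

lemma edig_nonneg (hm : 2 ≤ m) (z : ℤ) (i : ℕ) : 0 ≤ edig m z i :=
  Int.emod_nonneg _ (ne_of_gt (hM hm))

lemma edig_lt (hm : 2 ≤ m) (z : ℤ) (i : ℕ) : edig m z i < m :=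
  Int.emod_lt_of_pos _ (hM hm)

lemma emod_pow_succ (hm : 2 ≤ m) (z : ℤ) (i : ℕ) :
    z % (m:ℤ)^(i+1) = z % (m:ℤ)^i + (m:ℤ)^i * edig m z i := by
  have hP : (0:ℤ) < (m:ℤ)^i := by positivity
  have hm0 := hM hm
  have hdd : z / (m:ℤ)^(i+1) = (z / (m:ℤ)^i) / m := by
    rw [pow_succ]; exact (ediv_ediv z _ _ hP hm0).symm
  have h1 := Int.mul_ediv_add_emod z ((m:ℤ)^(i+1))
  have h2 := Int.mul_ediv_add_emod z ((m:ℤ)^i)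
  have h3 := Int.mul_ediv_add_emod (z / (m:ℤ)^i) (m:ℤ)
  rw [hdd] at h1
  rw [edig]
  linear_combination h1 - h2 - (m:ℤ)^i * h3

lemma edig_ext (hm : 2 ≤ m) (z z' : ℤ) (h : ∀ i, edig m z i = edig m z' i) : z = z' := by
  have key : ∀ i, z % (m:ℤ)^i = z' % (m:ℤ)^i := by
    intro i
    induction i with
    | zero => simp
    | succ i IH => rw [emod_pow_succ hm, emod_pow_succ hm, IH, h i]
  set i := (z - z').natAbs + 1 with hi
  have hdvd : (m:ℤ)^i ∣ z - z' := by
    apply Int.dvd_of_emod_eq_zero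
    rw [Int.sub_emod, key i, sub_self, Int.zero_emod]
  have hlt : (z - z').natAbs < m ^ i := by
    calc (z - z').natAbs < 2 ^ (z - z').natAbs := Nat.lt_two_pow_self
      _ ≤ 2 ^ i := Nat.pow_le_pow_right (by norm_num) (by omega)
      _ ≤ m ^ i := Nat.pow_le_pow_left hm i
  obtain ⟨t, ht⟩ := hdvd
  rcases eq_or_ne t 0 with rfl | htz
  · omega
  · exfalso
    have h1 : (z - z').natAbs = m^i * t.natAbs := by
      rw [ht, Int.natAbs_mul]
      congr 1
    have h2' : 1 ≤ t.natAbs := by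
      rcases Nat.eq_zero_or_pos t.natAbs with h' | h'
      · exact absurd (Int.natAbs_eq_zero.mp h') htz
      · exact h'
    have h3' : m^i * 1 ≤ m^i * t.natAbs := Nat.mul_le_mul_left _ h2'
    omega

/-- embedding of an integer as its base-m digit sequence. -/
def eSeq (m : ℕ) (hm : 2 ≤ m) (z : ℤ) : ℕ → Fin m := fun i =>
  ⟨(edig m z i).toNat, by
    have h1 := edig_nonneg hm z i
    have h2 := edig_lt hm z i
    omega⟩

lemma eSeq_val (hm : 2 ≤ m) (z : ℤ) (i : ℕ) :
    ((eSeq m hm z i : ℕ) : ℤ) = edig m z i := by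
  simp [eSeq]
  exact edig_nonneg hm z i

lemma eSeq_injective (hm : 2 ≤ m) {z z' : ℤ} (h : eSeq m hm z = eSeq m hm z') : z = z' := by
  apply edig_ext hm
  intro i
  have := congrFun h i
  have h1 := eSeq_val hm z i
  have h2 := eSeq_val hm z' i
  rw [this] at h1
  omega

lemma edig_neg_one (hm : 2 ≤ m) (i : ℕ) : edig m (-1) i = (m:ℤ) - 1 := by
  have hP : (0:ℤ) < (m:ℤ)^i := by positivity
  have hdiv : (-1 : ℤ) / (m:ℤ)^i = -1 := by
    have := (Int.ediv_emod_unique (a := (-1:ℤ)) (b := (m:ℤ)^i)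
      (q := -1) (r := (m:ℤ)^i - 1) hP).mpr ⟨by ring, by omega, by omega⟩
    exact this.1
  rw [edig, hdiv]
  have := (Int.ediv_emod_unique (a := (-1:ℤ)) (b := (m:ℤ))
    (q := -1) (r := (m:ℤ) - 1) (hM hm)).mpr ⟨by ring, by
      have := hM hm; omega, by omega⟩
  exact this.2

lemma edig_zero (hm : 2 ≤ m) (i : ℕ) : edig m 0 i = 0 := by
  simp [edig]

lemma eSeq_all_max (hm : 2 ≤ m) (z : ℤ) (h : ∀ i, ((eSeq m hm z i : ℕ)) = m - 1) :
    z = -1 := by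
  apply edig_ext hm
  intro i
  rw [edig_neg_one hm]
  have h1 := eSeq_val hm z i
  rw [h i] at h1
  omega

lemma edig_pow_mul (hm : 2 ≤ m) (k : ℕ) (y : ℤ) (i : ℕ) :
    edig m ((m:ℤ)^k * y) i = if i < k then 0 else edig m y (i - k) := by
  split
  · next hik =>
    rw [edig]
    have e1 : (m:ℤ)^k * y = ((m:ℤ)^(k-i) * y) * (m:ℤ)^i := by
      have : (m:ℤ)^(k-i) * (m:ℤ)^i = (m:ℤ)^k := by
        rw [← pow_add]; congr 1; omega
      calc (m:ℤ)^k * y = ((m:ℤ)^(k-i) * (m:ℤ)^i) * y := by rw [this]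
        _ = ((m:ℤ)^(k-i) * y) * (m:ℤ)^i := by ring
    rw [e1, Int.mul_ediv_cancel _ (by positivity)]
    obtain ⟨s, hs⟩ : ∃ s, k - i = s + 1 := ⟨k - i - 1, by omega⟩
    rw [hs, pow_succ]
    have e2 : (m:ℤ)^s * (m:ℤ) * y = ((m:ℤ)^s * y) * m := by ring
    rw [e2]
    exact Int.mul_emod_left _ _
  · next hik =>
    push_neg at hik
    rw [edig, edig]
    congr 1
    have e1 : (m:ℤ)^i = (m:ℤ)^k * (m:ℤ)^(i-k) := by rw [← pow_add]; congr 1; omega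
    rw [e1, ← ediv_ediv _ _ _ (by positivity) (by positivity),
      Int.mul_ediv_cancel_left _ (by positivity)]

lemma ediv_pred_pow (hm : 2 ≤ m) (w : ℤ) (hw : w % (m:ℤ) ≠ 0) {s : ℕ} (hs : 1 ≤ s) :
    (w - 1) / (m:ℤ)^s = w / (m:ℤ)^s := by
  have hm0 := hM hm
  have kew : (w - 1) / (m:ℤ) = w / (m:ℤ) := by
    have h1 := Int.mul_ediv_add_emod w (m:ℤ)
    have hr0 := Int.emod_nonneg w (ne_of_gt hm0)
    have hrm := Int.emod_lt_of_pos w hm0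
    have e : w - 1 = (w % m - 1) + (m:ℤ) * (w / m) := by linarith
    rw [e, Int.add_mul_ediv_left _ _ (ne_of_gt hm0),
      Int.ediv_eq_zero_of_lt (by omega) (by omega)]
    ring
  obtain ⟨s', rfl⟩ : ∃ s', s = s' + 1 := ⟨s - 1, by omega⟩
  have e1 : ((m:ℤ))^(s'+1) = (m:ℤ) * (m:ℤ)^s' := by ring
  rw [e1, ← ediv_ediv _ _ _ hm0 (by positivity), ← ediv_ediv _ _ _ hm0 (by positivity), kew]

end Odo

namespace Odo
variable {m : ℕ}

lemma low_emod (hm : 2 ≤ m) (z : ℤ) (j : ℕ)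
    (hlow : ∀ i, i < j → edig m z i = (m:ℤ) - 1) :
    z % (m:ℤ)^j = (m:ℤ)^j - 1 := by
  induction j with
  | zero => simp
  | succ j IH =>
    rw [emod_pow_succ hm, IH (fun i hi => hlow i (by omega)), hlow j (by omega)]
    rw [pow_succ]
    ring

lemma eSeq_zero_val (hm : 2 ≤ m) (i : ℕ) : ((eSeq m hm 0 i : ℕ)) = 0 := by
  have := eSeq_val hm 0 i
  rw [edig_zero hm] at this
  omega

/-- structural data for `z ≠ -1`. -/
lemma f1_eSeq (hm : 2 ≤ m) (z : ℤ) : f1 m (eSeq m hm z) = eSeq m hm (z + 1) := by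
  by_cases hz : z = -1
  · subst hz
    have hne : ¬ ∃ i, ((eSeq m hm (-1) i : ℕ)) ≠ m - 1 := by
      push_neg
      intro i
      have h1 := eSeq_val hm (-1) i
      rw [edig_neg_one hm] at h1
      omega
    funext i
    rw [f1, dif_neg hne]
    apply Fin.ext
    show (0:ℕ) = ((eSeq m hm (-1+1) i : ℕ))
    norm_num
    rw [eSeq_zero_val hm]
  · have hex : ∃ i, ((eSeq m hm z i : ℕ)) ≠ m - 1 := by
      by_contra hc
      push_neg at hc
      exact hz (eSeq_all_max hm z hc)
    have hjspec : ((eSeq m hm z (Nat.find hex) : ℕ)) ≠ m - 1 := Nat.find_spec hex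
    set j := Nat.find hex with hj
    have hlow : ∀ i, i < j → edig m z i = (m:ℤ) - 1 := by
      intro i hi
      have h2 : ¬ ((eSeq m hm z i : ℕ)) ≠ m - 1 := Nat.find_min hex hi
      push_neg at h2
      have h1 := eSeq_val hm z i
      rw [h2] at h1
      omega
    have hjd : edig m z j ≠ (m:ℤ) - 1 := by
      have h1 := eSeq_val hm z j
      intro hc
      apply hjspec
      rw [hc] at h1
      omega
    have hmod : z % (m:ℤ)^j = (m:ℤ)^j - 1 := low_emod hm z j hlow
    have hQ : (0:ℤ) < (m:ℤ)^j := by positivity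
    have hdvd : (m:ℤ)^j ∣ (z + 1) := by
      apply Int.dvd_of_emod_eq_zero
      rw [Int.add_emod, hmod]
      rcases eq_or_lt_of_le (by omega : (1:ℤ) ≤ (m:ℤ)^j) with hq1 | hq1
      · rw [← hq1]
        simp
      · have h2 : (1:ℤ) % (m:ℤ)^j = 1 := Int.emod_eq_of_lt (by norm_num) hq1
        rw [h2, (by ring : ((m:ℤ)^j - 1 + 1) = (m:ℤ)^j), Int.emod_self]
    obtain ⟨w, hw⟩ := hdvd
    have hzdiv : z / (m:ℤ)^j = w - 1 := by
      have e : z = ((m:ℤ)^j - 1) + (m:ℤ)^j * (w - 1) := by linarith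
      rw [e, (by ring : ((m:ℤ)^j - 1) + (m:ℤ)^j * (w-1) = ((m:ℤ)^j - 1) + ((m:ℤ)^j) * (w-1)),
        Int.add_mul_ediv_left _ _ (ne_of_gt hQ),
        Int.ediv_eq_zero_of_lt (by omega) (by omega)]
      ring
    have hrdig : edig m z j = (w - 1) % m := by rw [edig, hzdiv]
    have hm0 := hM hm
    have hr0 : 0 ≤ (w-1) % m := Int.emod_nonneg _ (ne_of_gt hm0)
    have hrm : (w-1) % m < m := Int.emod_lt_of_pos _ hm0
    have hrne : (w-1) % m ≠ (m:ℤ) - 1 := by rw [← hrdig]; exact hjd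
    have hwmod : w % (m:ℤ) = (w-1) % m + 1 := by
      have h1 := Int.mul_ediv_add_emod (w-1) (m:ℤ)
      have e : w = ((w-1)%m + 1) + ((w-1)/m) * m := by linarith
      conv_lhs => rw [e]
      rw [Int.add_mul_emod_self_right]
      apply Int.emod_eq_of_lt <;> omega
    have hwm : w % (m:ℤ) ≠ 0 := by rw [hwmod]; omega
    have hi_ge : ∀ s : ℕ, edig m z (j + s) = edig m (w-1) s := by
      intro s
      rw [edig, edig, pow_add, ← ediv_ediv _ _ _ hQ (by positivity), hzdiv]
    have hdig1 : ∀ i, i < j → edig m (z+1) i = 0 := by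
      intro i hi
      rw [hw, edig_pow_mul hm, if_pos hi]
    have hdig2 : edig m (z+1) j = (w-1) % m + 1 := by
      rw [hw, edig_pow_mul hm, if_neg (by omega)]
      have e : j - j = 0 := by omega
      rw [e]
      simpa [edig] using hwmod
    have hdig3 : ∀ s : ℕ, 1 ≤ s → edig m (z+1) (j+s) = edig m z (j+s) := by
      intro s hs
      rw [hw, edig_pow_mul hm, if_neg (by omega), hi_ge s]
      have e : j + s - j = s := by omega
      rw [e, edig, edig, ediv_pred_pow hm w hwm hs]
    funext i
    rw [f1, dif_pos hex]
    rcases lt_trichotomy i j with hij | hij | hij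
    · rw [if_pos (by rw [← hj]; exact hij)]
      apply Fin.ext
      show (0:ℕ) = ((eSeq m hm (z+1) i : ℕ))
      have h2 := eSeq_val hm (z+1) i
      rw [hdig1 i hij] at h2
      omega
    · rw [if_neg (by rw [← hj]; omega), dif_pos (by rw [← hj]; omega)]
      apply Fin.ext
      show ((eSeq m hm z i : ℕ)) + 1 = ((eSeq m hm (z+1) i : ℕ))
      have h1 := eSeq_val hm z i
      have h2 := eSeq_val hm (z+1) i
      rw [hij] at h1 h2 ⊢
      rw [hdig2] at h2
      rw [hrdig] at h1
      omega
    · rw [if_neg (by rw [← hj]; omega), dif_neg (by rw [← hj]; omega)]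
      apply Fin.ext
      show ((eSeq m hm z i : ℕ)) = ((eSeq m hm (z+1) i : ℕ))
      have h1 := eSeq_val hm z i
      have h2 := eSeq_val hm (z+1) i
      obtain ⟨s, rfl⟩ : ∃ s, i = j + s := ⟨i - j, by omega⟩
      rw [hdig3 s (by omega)] at h2
      omega

lemma f0_eSeq (hm : 2 ≤ m) (z : ℤ) : f0 m (eSeq m hm z) = eSeq m hm (dd m (z + 1)) := by
  by_cases hz : z = -1
  · subst hz
    have hne : ¬ ∃ i, ((eSeq m hm (-1) i : ℕ)) ≠ m - 1 := by
      push_neg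
      intro i
      have h1 := eSeq_val hm (-1) i
      rw [edig_neg_one hm] at h1
      omega
    funext i
    rw [f0, dif_neg hne]
    apply Fin.ext
    show (0:ℕ) = ((eSeq m hm (dd m (-1+1)) i : ℕ))
    norm_num
    rw [dd_zero, eSeq_zero_val hm]
  · have hex : ∃ i, ((eSeq m hm z i : ℕ)) ≠ m - 1 := by
      by_contra hc
      push_neg at hc
      exact hz (eSeq_all_max hm z hc)
    have hjspec : ((eSeq m hm z (Nat.find hex) : ℕ)) ≠ m - 1 := Nat.find_spec hex
    set j := Nat.find hex with hj
    have hlow : ∀ i, i < j → edig m z i = (m:ℤ) - 1 := by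
      intro i hi
      have h2 : ¬ ((eSeq m hm z i : ℕ)) ≠ m - 1 := Nat.find_min hex hi
      push_neg at h2
      have h1 := eSeq_val hm z i
      rw [h2] at h1
      omega
    have hjd : edig m z j ≠ (m:ℤ) - 1 := by
      have h1 := eSeq_val hm z j
      intro hc
      apply hjspec
      rw [hc] at h1
      omega
    have hmod : z % (m:ℤ)^j = (m:ℤ)^j - 1 := low_emod hm z j hlow
    have hQ : (0:ℤ) < (m:ℤ)^j := by positivity
    have hdvd : (m:ℤ)^j ∣ (z + 1) := by
      apply Int.dvd_of_emod_eq_zero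
      rw [Int.add_emod, hmod]
      rcases eq_or_lt_of_le (by omega : (1:ℤ) ≤ (m:ℤ)^j) with hq1 | hq1
      · rw [← hq1]
        simp
      · have h2 : (1:ℤ) % (m:ℤ)^j = 1 := Int.emod_eq_of_lt (by norm_num) hq1
        rw [h2, (by ring : ((m:ℤ)^j - 1 + 1) = (m:ℤ)^j), Int.emod_self]
    obtain ⟨w, hw⟩ := hdvd
    have hzdiv : z / (m:ℤ)^j = w - 1 := by
      have e : z = ((m:ℤ)^j - 1) + (m:ℤ)^j * (w - 1) := by linarith
      rw [e, Int.add_mul_ediv_left _ _ (ne_of_gt hQ),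
        Int.ediv_eq_zero_of_lt (by omega) (by omega)]
      ring
    have hrdig : edig m z j = (w - 1) % m := by rw [edig, hzdiv]
    have hm0 := hM hm
    have hr0 : 0 ≤ (w-1) % m := Int.emod_nonneg _ (ne_of_gt hm0)
    have hrm : (w-1) % m < m := Int.emod_lt_of_pos _ hm0
    have hrne : (w-1) % m ≠ (m:ℤ) - 1 := by rw [← hrdig]; exact hjd
    have hwmod : w % (m:ℤ) = (w-1) % m + 1 := by
      have h1 := Int.mul_ediv_add_emod (w-1) (m:ℤ)
      have e : w = ((w-1)%m + 1) + ((w-1)/m) * m := by linarith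
      conv_lhs => rw [e]
      rw [Int.add_mul_emod_self_right]
      apply Int.emod_eq_of_lt <;> omega
    have hwm : w % (m:ℤ) ≠ 0 := by rw [hwmod]; omega
    have hi_ge : ∀ s : ℕ, edig m z (j + s) = edig m (w-1) s := by
      intro s
      rw [edig, edig, pow_add, ← ediv_ediv _ _ _ hQ (by positivity), hzdiv]
    -- dd (z+1) = m^(j+1) * (w / m)
    have hddval : dd m (z + 1) = (m:ℤ)^(j+1) * (w / m) := by
      rw [hw, dd_pow_mul hm, dd_emod_ne hm hwm]
      have h1 := Int.mul_ediv_add_emod w (m:ℤ)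
      have e : w - w % m = (m:ℤ) * (w / m) := by linarith
      rw [e, pow_succ]
      ring
    have hwdiv : w / (m:ℤ) = (w - 1) / m := by
      have h1 := Int.mul_ediv_add_emod (w-1) (m:ℤ)
      have e : w = ((w-1)%m + 1) + (m:ℤ) * ((w-1)/m) := by linarith
      conv_lhs => rw [e]
      rw [Int.add_mul_ediv_left _ _ (ne_of_gt hm0),
        Int.ediv_eq_zero_of_lt (by omega) (by omega)]
      ring
    have hdigL : ∀ i, i ≤ j → edig m (dd m (z+1)) i = 0 := by
      intro i hi
      rw [hddval, edig_pow_mul hm, if_pos (by omega)]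
    have hdigH : ∀ s : ℕ, 1 ≤ s → edig m (dd m (z+1)) (j+s) = edig m z (j+s) := by
      intro s hs
      rw [hddval, edig_pow_mul hm, if_neg (by omega), hi_ge s]
      have e : j + s - (j+1) = s - 1 := by omega
      rw [e, hwdiv]
      obtain ⟨s', rfl⟩ : ∃ s', s = s' + 1 := ⟨s - 1, by omega⟩
      rw [edig, edig]
      have e2 : s' + 1 - 1 = s' := by omega
      rw [e2]
      congr 1
      rw [ediv_ediv _ _ _ hm0 (by positivity : (0:ℤ) < (m:ℤ)^s')]
      congr 1
      rw [pow_succ]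
      ring
    funext i
    rw [f0, dif_pos hex]
    rcases le_or_gt i j with hij | hij
    · rw [if_pos (by rw [← hj]; omega)]
      apply Fin.ext
      show (0:ℕ) = ((eSeq m hm (dd m (z+1)) i : ℕ))
      have h2 := eSeq_val hm (dd m (z+1)) i
      rw [hdigL i hij] at h2
      omega
    · rw [if_neg (by rw [← hj]; omega)]
      apply Fin.ext
      show ((eSeq m hm z i : ℕ)) = ((eSeq m hm (dd m (z+1)) i : ℕ))
      have h1 := eSeq_val hm z i
      have h2 := eSeq_val hm (dd m (z+1)) i
      obtain ⟨s, rfl⟩ : ∃ s, i = j + s := ⟨i - j, by omega⟩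
      rw [hdigH s (by omega)] at h2
      omega

end Odo

namespace Odo
variable {m : ℕ}

noncomputable def toF (m : ℕ) : Bool → ((ℕ → Fin m) → ℕ → Fin m)
  | true => f1 m
  | false => f0 m

noncomputable def wordT (m : ℕ) : List Bool → ((ℕ → Fin m) → ℕ → Fin m)
  | [] => id
  | g :: bs => toF m g ∘ wordT m bs

lemma wordT_eSeq (hm : 2 ≤ m) (bs : List Bool) (z : ℤ) :
    wordT m bs (eSeq m hm z) = eSeq m hm (zmap m bs z) := by
  induction bs with
  | nil => rfl
  | cons g bs IH =>
    cases g
    · show f0 m (wordT m bs (eSeq m hm z)) = _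
      rw [IH, f0_eSeq hm]
      rfl
    · show f1 m (wordT m bs (eSeq m hm z)) = _
      rw [IH, f1_eSeq hm]
      rfl

lemma out_zero (hm : 2 ≤ m) (g : Bool) (u : ℕ → Fin m) (i : ℕ)
    (hall : ∀ k, k ≤ i → ((u k : ℕ)) = m - 1) : ((toF m g u i : ℕ)) = 0 := by
  cases g
  · show ((f0 m u i : ℕ)) = 0
    rw [f0]
    by_cases hex : ∃ j, ((u j : ℕ)) ≠ m - 1
    · rw [dif_pos hex]
      have hfind : i < Nat.find hex := by
        by_contra hc
        push_neg at hc
        exact Nat.find_spec hex (hall _ hc)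
      rw [if_pos (by omega)]
    · rw [dif_neg hex]
  · show ((f1 m u i : ℕ)) = 0
    rw [f1]
    by_cases hex : ∃ j, ((u j : ℕ)) ≠ m - 1
    · rw [dif_pos hex]
      have hfind : i < Nat.find hex := by
        by_contra hc
        push_neg at hc
        exact Nat.find_spec hex (hall _ hc)
      rw [if_pos hfind]
    · rw [dif_neg hex]

lemma dep_gen (hm : 2 ≤ m) (g : Bool) (u v : ℕ → Fin m) (i : ℕ)
    (h : ∀ k, k ≤ i → u k = v k) : toF m g u i = toF m g v i := by
  by_cases hex : ∃ k, k ≤ i ∧ ((u k : ℕ)) ≠ m - 1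
  · obtain ⟨k₀, hk₀i, hk₀⟩ := hex
    have hvk₀ : ((v k₀ : ℕ)) ≠ m - 1 := by rw [← h k₀ hk₀i]; exact hk₀
    have hu : ∃ j, ((u j : ℕ)) ≠ m - 1 := ⟨k₀, hk₀⟩
    have hv : ∃ j, ((v j : ℕ)) ≠ m - 1 := ⟨k₀, hvk₀⟩
    have hui : Nat.find hu ≤ i := le_trans (Nat.find_le hk₀) hk₀i
    have hvu : Nat.find hv = Nat.find hu := by
      apply le_antisymm
      · exact Nat.find_le (by rw [← h _ hui]; exact Nat.find_spec hu)
      · have hvi : Nat.find hv ≤ i := le_trans (Nat.find_le hvk₀) hk₀i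
        exact Nat.find_le (by rw [h _ hvi]; exact Nat.find_spec hv)
    cases g
    · show f0 m u i = f0 m v i
      rw [f0, f0, dif_pos hu, dif_pos hv]
      by_cases hij : i ≤ Nat.find hu
      · rw [if_pos hij, if_pos (show i ≤ Nat.find hv by omega)]
      · rw [if_neg hij, if_neg (show ¬ i ≤ Nat.find hv by omega)]
        exact h i le_rfl
    · show f1 m u i = f1 m v i
      rw [f1, f1, dif_pos hu, dif_pos hv]
      rcases lt_trichotomy i (Nat.find hu) with hij | hij | hij
      · rw [if_pos hij, if_pos (show i < Nat.find hv by omega)]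
      · rw [if_neg (by omega), if_neg (show ¬ i < Nat.find hv by omega),
          dif_pos hij, dif_pos (show i = Nat.find hv by omega)]
        apply Fin.ext
        show ((u i : ℕ)) + 1 = ((v i : ℕ)) + 1
        rw [h i le_rfl]
      · rw [if_neg (by omega), if_neg (show ¬ i < Nat.find hv by omega),
          dif_neg (by omega), dif_neg (show ¬ i = Nat.find hv by omega)]
        exact h i le_rfl
  · push_neg at hex
    have hexv : ∀ k, k ≤ i → ((v k : ℕ)) = m - 1 := by
      intro k hk
      rw [← h k hk]
      exact hex k hk
    apply Fin.ext
    rw [out_zero hm g u i hex, out_zero hm g v i hexv]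

lemma dep_wordT (hm : 2 ≤ m) (bs : List Bool) (u v : ℕ → Fin m) (i : ℕ)
    (h : ∀ k, k ≤ i → u k = v k) : wordT m bs u i = wordT m bs v i := by
  induction bs generalizing i with
  | nil => exact h i le_rfl
  | cons g bs IH =>
    show toF m g (wordT m bs u) i = toF m g (wordT m bs v) i
    exact dep_gen hm g _ _ i (fun k hk => IH k (fun k' hk' => h k' (le_trans hk' hk)))

/-- value of the first `K` digits. -/
def valF (m : ℕ) (u : ℕ → Fin m) (K : ℕ) : ℤ :=
  ∑ k ∈ Finset.range K, ((u k : ℕ) : ℤ) * (m:ℤ)^k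

lemma valF_nonneg (u : ℕ → Fin m) (K : ℕ) : 0 ≤ valF m u K := by
  apply Finset.sum_nonneg
  intro k _
  positivity

lemma valF_lt (hm : 2 ≤ m) (u : ℕ → Fin m) (K : ℕ) : valF m u K < (m:ℤ)^K := by
  induction K with
  | zero => simp [valF]
  | succ K IH =>
    rw [valF, Finset.sum_range_succ, ← valF]
    have huK : ((u K : ℕ) : ℤ) ≤ (m:ℤ) - 1 := by
      have := (u K).isLt
      omega
    have hp : (0:ℤ) < (m:ℤ)^K := by positivity
    calc valF m u K + ((u K : ℕ) : ℤ) * (m:ℤ)^K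
        < (m:ℤ)^K + ((m:ℤ) - 1) * (m:ℤ)^K := by
          have := mul_le_mul_of_nonneg_right huK (le_of_lt hp)
          linarith
      _ = (m:ℤ)^(K+1) := by rw [pow_succ]; ring

lemma edig_valF (hm : 2 ≤ m) (u : ℕ → Fin m) :
    ∀ K k, k < K → edig m (valF m u K) k = ((u k : ℕ) : ℤ) := by
  intro K
  induction K with
  | zero => omega
  | succ K IH =>
    intro k hk
    rw [valF, Finset.sum_range_succ, ← valF]
    rcases lt_or_eq_of_le (by omega : k ≤ K) with hkK | hkK
    · have e1 : ((u K : ℕ):ℤ) * (m:ℤ)^K = (((u K : ℕ):ℤ) * (m:ℤ)^(K-k)) * (m:ℤ)^k := by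
        have : (m:ℤ)^(K-k) * (m:ℤ)^k = (m:ℤ)^K := by rw [← pow_add]; congr 1; omega
        calc ((u K : ℕ):ℤ) * (m:ℤ)^K = ((u K : ℕ):ℤ) * ((m:ℤ)^(K-k) * (m:ℤ)^k) := by rw [this]
          _ = (((u K : ℕ):ℤ) * (m:ℤ)^(K-k)) * (m:ℤ)^k := by ring
      rw [edig, e1, Int.add_mul_ediv_right _ _ (by positivity : (m:ℤ)^k ≠ 0)]
      have e2 : ((u K : ℕ):ℤ) * (m:ℤ)^(K-k) = (((u K : ℕ):ℤ) * (m:ℤ)^(K-k-1)) * m := by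
        have : (m:ℤ)^(K-k-1) * (m:ℤ) = (m:ℤ)^(K-k) := by
          rw [← pow_succ]; congr 1; omega
        calc ((u K : ℕ):ℤ) * (m:ℤ)^(K-k) = ((u K : ℕ):ℤ) * ((m:ℤ)^(K-k-1) * m) := by rw [this]
          _ = (((u K : ℕ):ℤ) * (m:ℤ)^(K-k-1)) * m := by ring
      rw [e2, Int.add_mul_emod_self_right, ← edig, IH k hkK]
    · subst hkK
      rw [edig, Int.add_mul_ediv_right _ _ (by positivity : (m:ℤ)^k ≠ 0),
        Int.ediv_eq_zero_of_lt (valF_nonneg u k) (valF_lt hm u k)]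
      have := (u k).isLt
      rw [zero_add]
      apply Int.emod_eq_of_lt (by positivity)
      omega

lemma eSeq_valF (hm : 2 ≤ m) (u : ℕ → Fin m) (K k : ℕ) (h : k < K) :
    eSeq m hm (valF m u K) k = u k := by
  apply Fin.ext
  have h1 := eSeq_val hm (valF m u K) k
  rw [edig_valF hm u K k h] at h1
  omega

/-- the central equivalence : equality of word transformations on sequences
is the same as equality of the integer maps. -/
lemma wordT_eq_iff (hm : 2 ≤ m) (bs bs' : List Bool) :
    wordT m bs = wordT m bs' ↔ ∀ z, zmap m bs z = zmap m bs' z := by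
  constructor
  · intro h z
    apply eSeq_injective hm
    rw [← wordT_eSeq hm, ← wordT_eSeq hm, h]
  · intro h
    funext u i
    have h1 : wordT m bs u i = wordT m bs (eSeq m hm (valF m u (i+1))) i :=
      dep_wordT hm bs u _ i (fun k hk => (eSeq_valF hm u (i+1) k (by omega)).symm)
    have h2 : wordT m bs' u i = wordT m bs' (eSeq m hm (valF m u (i+1))) i :=
      dep_wordT hm bs' u _ i (fun k hk => (eSeq_valF hm u (i+1) k (by omega)).symm)
    rw [h1, h2, wordT_eSeq hm, wordT_eSeq hm, h]

end Odo

namespace Odo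
variable {m : ℕ}

def dlen (m : ℕ) (d : ℕ × List ℕ) : ℕ := d.1 + glen m d.2

def Dset (m n : ℕ) : Set (ℕ × List ℕ) := {d | dlen m d = n}

noncomputable def nfWord (hm : 2 ≤ m) (d : ℕ × List ℕ) : List Bool :=
  Classical.choose (build hm d.2 d.1)

lemma nfWord_sem (hm : 2 ≤ m) (d : ℕ × List ℕ) :
    ∀ x, zmap m (nfWord hm d) x = sem m d.1 d.2 x :=
  (Classical.choose_spec (build hm d.2 d.1)).1

lemma nfWord_len (hm : 2 ≤ m) (d : ℕ × List ℕ) :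
    (nfWord hm d).length = dlen m d :=
  (Classical.choose_spec (build hm d.2 d.1)).2

noncomputable def semT (hm : 2 ≤ m) (d : ℕ × List ℕ) : (ℕ → Fin m) → ℕ → Fin m :=
  wordT m (nfWord hm d)

lemma foldr_map_toF (bs : List Bool) :
    (bs.map (toF m)).foldr (· ∘ ·) id = wordT m bs := by
  induction bs with
  | nil => rfl
  | cons g bs IH =>
    rw [List.map_cons, List.foldr_cons, IH]
    rfl

lemma toF_mem (g : Bool) : toF m g = f0 m ∨ toF m g = f1 m := by
  cases g
  · exact Or.inl rfl
  · exact Or.inr rfl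

lemma exists_bool_list (Lf : List ((ℕ → Fin m) → ℕ → Fin m))
    (hL : ∀ g ∈ Lf, g = f0 m ∨ g = f1 m) :
    ∃ bs : List Bool, bs.map (toF m) = Lf := by
  induction Lf with
  | nil => exact ⟨[], rfl⟩
  | cons g Lf IH =>
    obtain ⟨bs, hbs⟩ := IH (fun g' hg' => hL g' (List.mem_cons_of_mem _ hg'))
    rcases hL g List.mem_cons_self with h | h
    · exact ⟨false :: bs, by rw [List.map_cons, hbs, h]; rfl⟩
    · exact ⟨true :: bs, by rw [List.map_cons, hbs, h]; rfl⟩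

lemma semT_mem_SM (hm : 2 ≤ m) (d : ℕ × List ℕ) : semT hm d ∈ SM m := by
  refine ⟨(nfWord hm d).map (toF m), fun g hg => ?_, by rw [foldr_map_toF]; rfl⟩
  obtain ⟨b, _, rfl⟩ := List.mem_map.mp hg
  exact toF_mem b

lemma wordLength_semT (hm : 2 ≤ m) (d : ℕ × List ℕ) :
    wordLength m (semT hm d) = dlen m d := by
  have hmem : dlen m d ∈ {n | ∃ L : List ((ℕ → Fin m) → ℕ → Fin m),
      L.length = n ∧ (∀ g ∈ L, g = f0 m ∨ g = f1 m) ∧ L.foldr (· ∘ ·) id = semT hm d} := by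
    refine ⟨(nfWord hm d).map (toF m), ?_, fun g hg => ?_, by rw [foldr_map_toF]; rfl⟩
    · rw [List.length_map, nfWord_len]
    · obtain ⟨b, _, rfl⟩ := List.mem_map.mp hg
      exact toF_mem b
  have hlb : ∀ n' ∈ {n | ∃ L : List ((ℕ → Fin m) → ℕ → Fin m),
      L.length = n ∧ (∀ g ∈ L, g = f0 m ∨ g = f1 m) ∧ L.foldr (· ∘ ·) id = semT hm d},
      dlen m d ≤ n' := by
    rintro n' ⟨Lf, hlen, hprop, hfold⟩
    obtain ⟨bs, rfl⟩ := exists_bool_list Lf hprop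
    rw [foldr_map_toF] at hfold
    have hz : ∀ z, zmap m bs z = zmap m (nfWord hm d) z :=
      (wordT_eq_iff hm bs (nfWord hm d)).mp hfold
    obtain ⟨b2, L2, hsem2, hlen2⟩ := normalize hm bs
    have hsame : ∀ x, sem m b2 L2 x = sem m d.1 d.2 x := fun x => by
      rw [← hsem2 x, hz x, nfWord_sem hm d x]
    obtain ⟨hb, hL⟩ := sem_inj hm b2 d.1 L2 d.2 hsame
    rw [List.length_map] at hlen
    rw [dlen, ← hb, ← hL]
    omega
  apply le_antisymm
  · exact Nat.sInf_le hmem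
  · exact hlb _ (Nat.sInf_mem ⟨_, hmem⟩)

lemma semT_inj (hm : 2 ≤ m) : Function.Injective (semT hm) := by
  intro d d' h
  have hz := (wordT_eq_iff hm _ _).mp h
  have hsame : ∀ x, sem m d.1 d.2 x = sem m d'.1 d'.2 x := fun x => by
    rw [← nfWord_sem hm d x, hz x, nfWord_sem hm d' x]
  obtain ⟨hb, hL⟩ := sem_inj hm _ _ _ _ hsame
  exact Prod.ext hb hL

lemma gamma_set_eq (hm : 2 ≤ m) (n : ℕ) :
    {s | s ∈ SM m ∧ wordLength m s = n} = semT hm '' (Dset m n) := by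
  ext s
  constructor
  · rintro ⟨⟨Lf, hprop, hfold⟩, hlen⟩
    obtain ⟨bs, rfl⟩ := exists_bool_list Lf hprop
    rw [foldr_map_toF] at hfold
    obtain ⟨b2, L2, hsem2, _⟩ := normalize hm bs
    have hs : semT hm (b2, L2) = s := by
      rw [← hfold]
      apply ((wordT_eq_iff hm _ _).mpr)
      intro z
      rw [nfWord_sem hm (b2, L2) z]
      exact (hsem2 z).symm
    refine ⟨(b2, L2), ?_, hs⟩
    have hwl := wordLength_semT hm (b2, L2)
    rw [hs, hlen] at hwl
    exact hwl.symm
  · rintro ⟨d, hd, rfl⟩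
    exact ⟨semT_mem_SM hm d, by rw [wordLength_semT hm d]; exact hd⟩

lemma gamma_eq (hm : 2 ≤ m) (n : ℕ) : gammaW m n = (Dset m n).ncard := by
  rw [gammaW]
  have h1 : {s | s ∈ SM m ∧ wordLength m s = n} = semT hm '' (Dset m n) :=
    gamma_set_eq hm n
  rw [h1, Set.ncard_image_of_injective _ (semT_inj hm)]

lemma Gs_finite (hm : 2 ≤ m) : ∀ t : ℕ, {L : List ℕ | glen m L = t}.Finite := by
  intro t
  induction t using Nat.strong_induction_on with
  | _ t IH =>
    match t with
    | 0 =>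
      apply Set.Finite.subset (Set.finite_singleton ([] : List ℕ))
      rintro L hL
      cases L with
      | nil => simp
      | cons c M =>
        exfalso
        have : glen m (c :: M) = (c+1) + m * glen m M := rfl
        rw [Set.mem_setOf_eq, this] at hL
        omega
    | (t'+1) =>
      have hfin : ∀ p : ℕ × ℕ, p ∈ (Set.Iio (t'+1) ×ˢ Set.Iio (t'+1)) →
          ((fun M => p.1 :: M) '' {L : List ℕ | glen m L = p.2}).Finite := by
        intro p hp
        exact (IH p.2 hp.2).image _
      apply Set.Finite.subset
        (Set.Finite.biUnion ((Set.finite_Iio (t'+1)).prod (Set.finite_Iio (t'+1))) hfin)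
      rintro L hL
      cases L with
      | nil => simp [Set.mem_setOf_eq, glen] at hL
      | cons c M =>
        have hc : glen m (c :: M) = (c+1) + m * glen m M := rfl
        rw [Set.mem_setOf_eq, hc] at hL
        have hle : glen m M ≤ m * glen m M := Nat.le_mul_of_pos_left _ (by omega)
        apply Set.mem_biUnion (show (c, glen m M) ∈
          (Set.Iio (t'+1) ×ˢ Set.Iio (t'+1)) from ⟨by simp; omega, by simp; omega⟩)
        exact ⟨M, rfl, rfl⟩

lemma Dset_finite (hm : 2 ≤ m) (n : ℕ) : (Dset m n).Finite := by
  have hfin : ∀ b : ℕ, b ∈ Set.Iic n →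
      ((fun L => (b, L)) '' {L : List ℕ | glen m L = n - b}).Finite :=
    fun b _ => (Gs_finite hm (n - b)).image _
  apply Set.Finite.subset (Set.Finite.biUnion (Set.finite_Iic n) hfin)
  rintro ⟨b, L⟩ hd
  have hd' : b + glen m L = n := hd
  apply Set.mem_biUnion (show b ∈ Set.Iic n by simp; omega)
  exact ⟨L, by simp only [Set.mem_setOf_eq]; omega, rfl⟩

lemma Dset_succ (hm : 2 ≤ m) (n : ℕ) :
    Dset m (n+1) = (fun d : ℕ × List ℕ => (d.1 + 1, d.2)) '' Dset m n ∪
      (fun d : ℕ × List ℕ => ((0:ℕ), (n - m * glen m d.2) :: d.2)) '' Dset m (n / m) := by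
  ext ⟨b, L⟩
  simp only [Dset, dlen, Set.mem_setOf_eq, Set.mem_union, Set.mem_image]
  constructor
  · intro hd
    rcases Nat.eq_zero_or_pos b with rfl | hb
    · cases L with
      | nil =>
        exfalso
        simp [glen] at hd
      | cons c M =>
        right
        have hg : glen m (c :: M) = (c+1) + m * glen m M := rfl
        rw [hg] at hd
        have h1 : m * glen m M ≤ n := by omega
        have h2 : glen m M ≤ n / m := (Nat.le_div_iff_mul_le (by omega)).mpr
          (by rw [mul_comm]; omega)
        refine ⟨(n / m - glen m M, M), ?_, ?_⟩
        · show (n / m - glen m M) + glen m M = n / m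
          omega
        · have hc : n - m * glen m M = c := by omega
          rw [hc]
    · left
      refine ⟨(b-1, L), ?_, ?_⟩
      · show (b-1) + glen m L = n
        omega
      · show ((b-1)+1, L) = (b, L)
        congr 1
        omega
  · rintro (⟨⟨b', L'⟩, hd, heq⟩ | ⟨⟨b', L'⟩, hd, heq⟩)
    · cases heq
      have hd' : b' + glen m L' = n := hd
      omega
    · cases heq
      have hd' : b' + glen m L' = n / m := hd
      have hg : glen m ((n - m * glen m L') :: L')
          = (n - m * glen m L' + 1) + m * glen m L' := rfl
      rw [hg]
      have h2 : glen m L' ≤ n / m := by omega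
      have h3 : m * glen m L' ≤ m * (n / m) := Nat.mul_le_mul_left m h2
      have h4 : m * (n / m) ≤ n := by
        rw [mul_comm]
        exact Nat.div_mul_le_self n m
      omega

end Odo


open Odo in
/-- The word growth function satisfies `γ_m(n+1) = γ_m(n) + γ_m(⌊n/m⌋)`. -/
theorem gamma_functional_equation (m : ℕ) (hm : 2 ≤ m) (n : ℕ) :
    gammaW m (n + 1) = gammaW m n + gammaW m (n / m) := by
  rw [gamma_eq hm (n+1), gamma_eq hm n, gamma_eq hm (n/m), Dset_succ hm n]
  have hinjA : Function.Injective (fun d : ℕ × List ℕ => (d.1 + 1, d.2)) := by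
    rintro ⟨a, b⟩ ⟨c, d⟩ h
    simp only [Prod.mk.injEq] at h
    exact Prod.ext (by omega) h.2
  have hinjB : Set.InjOn (fun d : ℕ × List ℕ => ((0:ℕ), (n - m * glen m d.2) :: d.2))
      (Dset m (n / m)) := by
    rintro ⟨a, b⟩ ha ⟨c, d⟩ hc h
    simp only [Prod.mk.injEq, List.cons.injEq] at h
    have hb : b = d := h.2.2
    subst hb
    have h1 : a + glen m b = n / m := ha
    have h2 : c + glen m b = n / m := hc
    exact Prod.ext (by omega) rfl
  have hdisj : Disjoint ((fun d : ℕ × List ℕ => (d.1 + 1, d.2)) '' Dset m n)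
      ((fun d : ℕ × List ℕ => ((0:ℕ), (n - m * glen m d.2) :: d.2)) '' Dset m (n / m)) := by
    rw [Set.disjoint_left]
    rintro x ⟨d, _, rfl⟩ ⟨d', _, heq⟩
    have := congrArg Prod.fst heq
    simp at this
  rw [Set.ncard_union_eq hdisj ((Dset_finite hm n).image _) ((Dset_finite hm (n/m)).image _),
    Set.ncard_image_of_injective _ hinjA, Set.ncard_image_of_injOn hinjB]
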